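/- Consider the N-particle chain ẍ_k = ω²(x_{k+1} − x_k − a) − ω²(x_k − x_{k−1} − a) (with free ends), a = 1/N, ω = ω'N, and initial data x_{k+1}(0) − x_k(0) = (1/N)X(k/N), ẋ_{k+1}(0) − ẋ_k(0) = (1/N)V(k/N) with X, V ∈ C⁴([0,1]), X(0)=X(1)=1, V(0)=V(1)=0. Let α = ∫₀¹|X''|, β = ∫₀¹|V''|, and γ = 2α + β/ω'. Then for all t ≥ 0 and all k = 1,…,N−1, (1−γ)/N ≤ x_{k+1}(t) − x_k(t) ≤ (1+γ)/N. -/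

import Mathlib

lemma cd_deriv {f : ℝ → ℝ} {n : ℕ∞} (hf : ContDiff ℝ (n+1) f) : ContDiff ℝ n (deriv f) :=
  ((contDiff_succ_iff_deriv).mp hf).2.2

lemma lip_bound {f : ℝ → ℝ} (hf : ContDiff ℝ 4 f) (h01 : f 0 = f 1)
    {A : ℝ} (hA : A = ∫ s in (0:ℝ)..1, |deriv (deriv f) s|) :
    ∀ s ∈ Set.Icc (0:ℝ) 1, ∀ u ∈ Set.Icc (0:ℝ) 1, |f s - f u| ≤ A * |s - u| := by
  have hf1 : ContDiff ℝ 3 (deriv f) := cd_deriv (n := 3) (by norm_num; exact hf)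
  have hf2 : ContDiff ℝ 2 (deriv (deriv f)) := cd_deriv (n := 2) (by norm_num; exact hf1)
  have hc2 : Continuous (deriv (deriv f)) := hf2.continuous
  have hd1 : Differentiable ℝ f := hf.differentiable (by norm_num)
  have hd2 : Differentiable ℝ (deriv f) := hf1.differentiable (by norm_num)
  -- Rolle
  obtain ⟨c, hc, hc0⟩ := exists_deriv_eq_zero (by norm_num : (0:ℝ) < 1)
    hf.continuous.continuousOn h01
  have hc' : c ∈ Set.Icc (0:ℝ) 1 := Set.mem_Icc_of_Ioo hc
  -- |f'(s)| ≤ A on [0,1]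
  have hA0 : ∀ s ∈ Set.Icc (0:ℝ) 1, |deriv f s| ≤ A := by
    intro s hs
    have hint : ∫ y in c..s, deriv (deriv f) y = deriv f s - deriv f c :=
      intervalIntegral.integral_deriv_eq_sub' (deriv f) rfl (fun y _ => hd2 y)
        hc2.continuousOn
    have h1 : |deriv f s| = |∫ y in c..s, deriv (deriv f) y| := by
      rw [hint, hc0, sub_zero]
    rw [h1, hA]
    rcases le_total c s with h | h
    · calc |∫ y in c..s, deriv (deriv f) y| ≤ ∫ y in c..s, |deriv (deriv f) y| :=
            intervalIntegral.abs_integral_le_integral_abs h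
        _ ≤ ∫ y in (0:ℝ)..1, |deriv (deriv f) y| :=
            intervalIntegral.integral_mono_interval hc'.1 h hs.2
              (Filter.Eventually.of_forall fun y => abs_nonneg _)
              (hc2.abs.intervalIntegrable 0 1)
    · rw [intervalIntegral.integral_symm, abs_neg]
      calc |∫ y in s..c, deriv (deriv f) y| ≤ ∫ y in s..c, |deriv (deriv f) y| :=
            intervalIntegral.abs_integral_le_integral_abs h
        _ ≤ ∫ y in (0:ℝ)..1, |deriv (deriv f) y| :=
            intervalIntegral.integral_mono_interval hs.1 h hc'.2
              (Filter.Eventually.of_forall fun y => abs_nonneg _)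
              (hc2.abs.intervalIntegrable 0 1)
  -- conclude
  intro s hs u hu
  have hint : ∫ y in u..s, deriv f y = f s - f u :=
    intervalIntegral.integral_deriv_eq_sub' f rfl (fun y _ => hd1 y)
      (hd2.continuous.continuousOn)
  rw [← hint]
  have : ∀ y ∈ Set.uIoc u s, ‖deriv f y‖ ≤ A := by
    intro y hy
    have : y ∈ Set.Icc (0:ℝ) 1 := by
      have := Set.uIoc_subset_uIcc hy
      rcases le_total u s with h | h
      · rw [Set.uIcc_of_le h] at this; exact ⟨le_trans hu.1 this.1, le_trans this.2 hs.2⟩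
      · rw [Set.uIcc_of_ge h] at this; exact ⟨le_trans hs.1 this.1, le_trans this.2 hu.2⟩
    exact hA0 y this
  calc |∫ y in u..s, deriv f y| ≤ A * |s - u| :=
    intervalIntegral.norm_integral_le_of_norm_le_const this


lemma abel_sum (a b : ℕ → ℝ) (M : ℕ) :
    ∑ k ∈ Finset.range M, ((a (k+1) - a k) * (b (k+1) - b k)
      + b (k+1) * (a (k+2) - 2*a (k+1) + a k))
    = b M * (a (M+1) - a M) - b 0 * (a 1 - a 0) := by
  induction M with
  | zero => simp
  | succ n ih => rw [Finset.sum_range_succ, ih]; ring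

lemma wave_energy (N : ℕ) (hN : 1 ≤ N) (ω : ℝ)
    (q p : ℝ → ℕ → ℝ)
    (hq0 : ∀ t, q t 0 = 0) (hqN : ∀ t, q t N = 0)
    (hp : ∀ t k, HasDerivAt (fun s => q s k) (p t k) t)
    (hp0 : ∀ t, p t 0 = 0) (hpN : ∀ t, p t N = 0)
    (hlap : ∀ t, ∀ k, 1 ≤ k → k ≤ N - 1 → HasDerivAt (fun s => p s k)
        (ω^2 * (q t (k+1) - 2*q t k + q t (k-1))) t) :
    ∀ t, ∀ k ≤ N, ω^2 * (q t k)^2 ≤ (N:ℝ) *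
      ((∑ j ∈ Finset.range (N-1), (p 0 (j+1))^2)
        + ω^2 * ∑ j ∈ Finset.range N, (q 0 (j+1) - q 0 j)^2) := by
  set E : ℝ → ℝ := fun t => (∑ j ∈ Finset.range (N-1), (p t (j+1))^2)/2
    + ω^2/2 * ∑ j ∈ Finset.range N, (q t (j+1) - q t j)^2 with hE
  have hNsub : N - 1 + 1 = N := Nat.succ_pred_eq_of_pos hN
  have hEderiv : ∀ t, HasDerivAt E 0 t := by
    intro t
    have h1 : HasDerivAt (fun s => (∑ j ∈ Finset.range (N-1), (p s (j+1))^2)/2)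
        (∑ j ∈ Finset.range (N-1),
          p t (j+1) * (ω^2 * (q t (j+2) - 2*q t (j+1) + q t j))) t := by
      have : HasDerivAt (fun s => ∑ j ∈ Finset.range (N-1), (p s (j+1))^2)
          (∑ j ∈ Finset.range (N-1),
            2 * p t (j+1) * (ω^2 * (q t (j+2) - 2*q t (j+1) + q t j))) t := by
        apply HasDerivAt.fun_sum
        intro j hj
        have hjmem := Finset.mem_range.mp hj
        have hl := hlap t (j+1) (Nat.le_add_left 1 j) (by omega)
        have : HasDerivAt (fun s => (p s (j+1))^2)
            (2 * p t (j+1) * (ω^2 * (q t (j+1+1) - 2*q t (j+1) + q t (j+1-1)))) t := by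
          have := hl.fun_pow 2
          simpa [mul_comm, mul_assoc, mul_left_comm] using this
        simpa using this
      have h2 := this.div_const 2
      refine h2.congr_deriv ?_
      rw [Finset.sum_div]
      apply Finset.sum_congr rfl
      intro j hj; ring
    have h2 : HasDerivAt (fun s => ω^2/2 * ∑ j ∈ Finset.range N, (q s (j+1) - q s j)^2)
        (ω^2 * ∑ j ∈ Finset.range N, (q t (j+1) - q t j) * (p t (j+1) - p t j)) t := by
      have : HasDerivAt (fun s => ∑ j ∈ Finset.range N, (q s (j+1) - q s j)^2)
          (∑ j ∈ Finset.range N, 2 * (q t (j+1) - q t j) * (p t (j+1) - p t j)) t := by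
        apply HasDerivAt.fun_sum
        intro j hj
        have := ((hp t (j+1)).fun_sub (hp t j)).fun_pow 2
        simpa [mul_comm, mul_assoc, mul_left_comm] using this
      have h3 := this.const_mul (ω^2/2)
      refine h3.congr_deriv ?_
      rw [Finset.mul_sum, Finset.mul_sum]
      apply Finset.sum_congr rfl
      intro j hj; ring
    have h4 := h1.add h2
    refine h4.congr_deriv ?_
    -- show 0 = sum₁ + sum₂
    have key := abel_sum (q t) (p t) (N-1)
    rw [Finset.sum_add_distrib] at key
    -- split the range N sum
    have hsplit : ∑ j ∈ Finset.range N, (q t (j+1) - q t j) * (p t (j+1) - p t j)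
        = (∑ j ∈ Finset.range (N-1), (q t (j+1) - q t j) * (p t (j+1) - p t j))
          + (q t N - q t (N-1)) * (p t N - p t (N-1)) := by
      rw [← hNsub, Finset.sum_range_succ, hNsub]
    have e1 : ∑ j ∈ Finset.range (N-1),
        p t (j+1) * (ω^2 * (q t (j+2) - 2*q t (j+1) + q t j))
        = ω^2 * ∑ j ∈ Finset.range (N-1),
            p t (j+1) * (q t (j+2) - 2*q t (j+1) + q t j) := by
      rw [Finset.mul_sum]; apply Finset.sum_congr rfl; intro j hj; ring
    rw [e1, hsplit]
    have hb0 : p t 0 = 0 := hp0 t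
    have hbN : p t N = 0 := hpN t
    have haN : q t N = 0 := hqN t
    have key2 : ∑ j ∈ Finset.range (N-1), p t (j+1) * (q t (j+2) - 2*q t (j+1) + q t j)
        = p t (N-1) * (q t (N-1+1) - q t (N-1))
          - p t 0 * (q t 1 - q t 0)
          - ∑ j ∈ Finset.range (N-1), (q t (j+1) - q t j) * (p t (j+1) - p t j) := by
      have : ∀ j, p t (j+1) * (q t (j+2) - 2*q t (j+1) + q t j)
          = ((q t (j+1) - q t j) * (p t (j+1) - p t j)
            + p t (j+1) * (q t (j+2) - 2*q t (j+1) + q t j))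
            - (q t (j+1) - q t j) * (p t (j+1) - p t j) := by intro j; ring
      calc ∑ j ∈ Finset.range (N-1), p t (j+1) * (q t (j+2) - 2*q t (j+1) + q t j)
          = ∑ j ∈ Finset.range (N-1), (((q t (j+1) - q t j) * (p t (j+1) - p t j)
            + p t (j+1) * (q t (j+2) - 2*q t (j+1) + q t j))
            - (q t (j+1) - q t j) * (p t (j+1) - p t j)) := by
              apply Finset.sum_congr rfl; intro j _; exact this j
        _ = _ := by
          rw [Finset.sum_sub_distrib, abel_sum (q t) (p t) (N-1)]
    rw [key2, hNsub, hb0, hbN, haN]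
    ring
  -- E is constant
  have hEconst : ∀ t, E t = E 0 := by
    have hd : Differentiable ℝ E := fun t => (hEderiv t).differentiableAt
    have h0 : ∀ t, deriv E t = 0 := fun t => (hEderiv t).deriv
    intro t; exact is_const_of_deriv_eq_zero hd h0 t 0
  intro t k hk
  -- q t k = telescoping sum
  have htel : q t k = ∑ j ∈ Finset.range k, (q t (j+1) - q t j) := by
    rw [Finset.sum_range_sub (fun j => q t j) k, hq0 t, sub_zero]
  have hCS : (q t k)^2 ≤ (k:ℝ) * ∑ j ∈ Finset.range k, (q t (j+1) - q t j)^2 := by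
    rw [htel]
    have := sq_sum_le_card_mul_sum_sq (s := Finset.range k)
      (f := fun j => q t (j+1) - q t j)
    simpa using this
  have hsub : ∑ j ∈ Finset.range k, (q t (j+1) - q t j)^2
      ≤ ∑ j ∈ Finset.range N, (q t (j+1) - q t j)^2 :=
    Finset.sum_le_sum_of_subset_of_nonneg (Finset.range_subset_range.mpr hk)
      (fun j _ _ => sq_nonneg _)
  have hE2 : ω^2 * ∑ j ∈ Finset.range N, (q t (j+1) - q t j)^2 ≤ 2 * E 0 := by
    rw [← hEconst t, hE]
    have hnn : 0 ≤ ∑ j ∈ Finset.range (N-1), (p t (j+1))^2 :=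
      Finset.sum_nonneg fun j _ => sq_nonneg _
    nlinarith [hnn]
  have h2E : 2 * E 0 ≤ (∑ j ∈ Finset.range (N-1), (p 0 (j+1))^2)
      + ω^2 * ∑ j ∈ Finset.range N, (q 0 (j+1) - q 0 j)^2 := by
    rw [hE]; ring_nf; nlinarith [Finset.sum_nonneg (s := Finset.range (N-1)) (f := fun j => (p 0 (j+1))^2) (fun j _ => sq_nonneg _)]
  have hkN : (k:ℝ) ≤ (N:ℝ) := Nat.cast_le.mpr hk
  have hq2 : ω^2 * (q t k)^2 ≤ (N:ℝ) * (ω^2 * ∑ j ∈ Finset.range N, (q t (j+1) - q t j)^2) := by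
    have h1 : (q t k)^2 ≤ (N:ℝ) * ∑ j ∈ Finset.range N, (q t (j+1) - q t j)^2 := by
      calc (q t k)^2 ≤ (k:ℝ) * ∑ j ∈ Finset.range k, (q t (j+1) - q t j)^2 := hCS
        _ ≤ (N:ℝ) * ∑ j ∈ Finset.range N, (q t (j+1) - q t j)^2 := by
            apply mul_le_mul hkN hsub (Finset.sum_nonneg fun j _ => sq_nonneg _) (Nat.cast_nonneg N)
    nlinarith [sq_nonneg ω, h1, sq_nonneg (q t k)]
  calc ω^2 * (q t k)^2 ≤ (N:ℝ) * (ω^2 * ∑ j ∈ Finset.range N, (q t (j+1) - q t j)^2) := hq2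
    _ ≤ (N:ℝ) * (2 * E 0) := by
        apply mul_le_mul_of_nonneg_left hE2 (Nat.cast_nonneg N)
    _ ≤ _ := mul_le_mul_of_nonneg_left h2E (Nat.cast_nonneg N)

/-- γ-bounds for the harmonic chain: with `a = 1/N`, `ω = ω'N`, initial gaps and gap
velocities given by smooth profiles `X, V` with `X(0)=X(1)=1`, `V(0)=V(1)=0`, and
`γ = 2α + β/ω'` where `α = ∫₀¹|X''|`, `β = ∫₀¹|V''|`, all gaps stay in
`[(1-γ)/N, (1+γ)/N]` for all `t ≥ 0`. -/
theorem stmt_10 (N : ℕ) (hN : 2 ≤ N) (ω' : ℝ) (hω : 0 < ω')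
    (X V : ℝ → ℝ) (hX : ContDiff ℝ 4 X) (hV : ContDiff ℝ 4 V)
    (hX0 : X 0 = 1) (hX1 : X 1 = 1) (hV0 : V 0 = 0) (hV1 : V 1 = 0)
    (x : ℝ → ℕ → ℝ) (hsm : ∀ k, ContDiff ℝ 2 (fun t => x t k))
    (hode1 : ∀ t : ℝ, deriv (deriv (fun s => x s 1)) t
      = (ω' * N)^2 * (x t 2 - x t 1 - 1 / N))
    (hodek : ∀ t : ℝ, ∀ k ∈ Set.Icc 2 (N-1), deriv (deriv (fun s => x s k)) t
      = (ω' * N)^2 * (x t (k+1) - x t k - 1 / N)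
        - (ω' * N)^2 * (x t k - x t (k-1) - 1 / N))
    (hodeN : ∀ t : ℝ, deriv (deriv (fun s => x s N)) t
      = -((ω' * N)^2) * (x t N - x t (N-1) - 1 / N))
    (hinit : ∀ k ∈ Set.Icc 1 (N-1), x 0 (k+1) - x 0 k = (1 / N) * X ((k : ℝ) / N))
    (hinitv : ∀ k ∈ Set.Icc 1 (N-1),
      deriv (fun s => x s (k+1)) 0 - deriv (fun s => x s k) 0 = (1 / N) * V ((k : ℝ) / N))
    (α β γ : ℝ)
    (hα : α = ∫ s in (0:ℝ)..1, |deriv (deriv X) s|)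
    (hβ : β = ∫ s in (0:ℝ)..1, |deriv (deriv V) s|)
    (hγ : γ = 2 * α + β / ω') :
    ∀ t : ℝ, 0 ≤ t → ∀ k ∈ Set.Icc 1 (N-1),
      (1 - γ) / N ≤ x t (k+1) - x t k ∧ x t (k+1) - x t k ≤ (1 + γ) / N := by
  have hN0 : (0:ℝ) < (N:ℝ) := by positivity
  have hωN : (0:ℝ) < ω' * N := by positivity
  -- gap and velocity variables
  set q : ℝ → ℕ → ℝ := fun t k => if 1 ≤ k ∧ k ≤ N - 1 then x t (k+1) - x t k - 1/N else 0 with hqdef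
  set p : ℝ → ℕ → ℝ := fun t k => if 1 ≤ k ∧ k ≤ N - 1
    then deriv (fun s => x s (k+1)) t - deriv (fun s => x s k) t else 0 with hpdef
  -- basic derivative facts
  have hxd : ∀ j t, HasDerivAt (fun s => x s j) (deriv (fun s => x s j) t) t := by
    intro j t
    exact (((hsm j).differentiable (by norm_num)) t).hasDerivAt
  have hxd2 : ∀ j t, HasDerivAt (deriv (fun s => x s j)) (deriv (deriv (fun s => x s j)) t) t := by
    intro j t
    have h1 : ContDiff ℝ 1 (deriv (fun s => x s j)) := cd_deriv (n := 1) (by norm_num; exact hsm j)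
    exact ((h1.differentiable (by norm_num)) t).hasDerivAt
  have hq0 : ∀ t, q t 0 = 0 := by intro t; simp [hqdef]
  have hqN : ∀ t, q t N = 0 := by
    intro t; simp only [hqdef]; rw [if_neg]; omega
  have hp0 : ∀ t, p t 0 = 0 := by intro t; simp [hpdef]
  have hpN : ∀ t, p t N = 0 := by
    intro t; simp only [hpdef]; rw [if_neg]; omega
  have hqin : ∀ t, ∀ k, 1 ≤ k → k ≤ N - 1 → q t k = x t (k+1) - x t k - 1/N := by
    intro t k h1 h2; simp only [hqdef]; rw [if_pos ⟨h1, h2⟩]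
  have hpin : ∀ t, ∀ k, 1 ≤ k → k ≤ N - 1 →
      p t k = deriv (fun s => x s (k+1)) t - deriv (fun s => x s k) t := by
    intro t k h1 h2; simp only [hpdef]; rw [if_pos ⟨h1, h2⟩]
  have hp : ∀ t k, HasDerivAt (fun s => q s k) (p t k) t := by
    intro t k
    by_cases h : 1 ≤ k ∧ k ≤ N - 1
    · have hfun : (fun s => q s k) = fun s => x s (k+1) - x s k - 1/N := by
        funext s; simp only [hqdef]; rw [if_pos h]
      rw [hfun, hpin t k h.1 h.2]
      exact ((hxd (k+1) t).sub (hxd k t)).sub_const _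
    · have hfun : (fun s => q s k) = fun _ => (0:ℝ) := by
        funext s; simp only [hqdef]; rw [if_neg h]
      have hpv : p t k = 0 := by simp only [hpdef]; rw [if_neg h]
      rw [hfun, hpv]
      exact hasDerivAt_const t 0
  -- the discrete wave equation for q
  have hlap : ∀ t, ∀ k, 1 ≤ k → k ≤ N - 1 → HasDerivAt (fun s => p s k)
      ((ω' * N)^2 * (q t (k+1) - 2*q t k + q t (k-1))) t := by
    intro t k h1 h2
    have hfun : (fun s => p s k)
        = fun s => deriv (fun u => x u (k+1)) s - deriv (fun u => x u k) s := by
      funext s; simp only [hpdef]; rw [if_pos ⟨h1, h2⟩]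
    rw [hfun]
    have hD : HasDerivAt (fun s => deriv (fun u => x u (k+1)) s - deriv (fun u => x u k) s)
        (deriv (deriv (fun u => x u (k+1))) t - deriv (deriv (fun u => x u k)) t) t :=
      (hxd2 (k+1) t).sub (hxd2 k t)
    convert hD using 1
    -- value identity, by cases
    by_cases hk1 : k = 1
    · subst hk1
      by_cases hkN : N = 2
      · subst hkN
        have e1 := hode1 t
        have eN := hodeN t
        norm_num at e1 eN ⊢
        rw [e1, eN, hqin t 1 le_rfl (by omega)]
        have h2' : q t 2 = 0 := by simp only [hqdef]; rw [if_neg]; omega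
        have h0' : q t 0 = 0 := hq0 t
        rw [h2', h0']
        norm_num; ring
      · -- N ≥ 3, k = 1
        have hN3 : 3 ≤ N := by omega
        have e1 := hode1 t
        have e2 := hodek t 2 ⟨by omega, by omega⟩
        rw [e2, e1, hqin t 2 (by omega) (by omega), hqin t 1 le_rfl (by omega), hq0 t]
        norm_num; ring
    · -- k ≥ 2
      have hk2 : 2 ≤ k := by omega
      have ek := hodek t k ⟨hk2, h2⟩
      by_cases hkN : k = N - 1
      · -- top case
        have hkN' : k + 1 = N := by omega
        have eN := hodeN t
        rw [hkN', eN, ek]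
        have hqtop : q t N = 0 := hqN t
        rw [hqtop, hqin t k h1 h2, hqin t (k-1) (by omega) (by omega)]
        have hkk : k - 1 + 1 = k := by omega
        rw [hkk, hkN']
        rw [show N - 1 = k from hkN.symm]
        ring
      · -- interior
        have hk1' : k + 1 ≤ N - 1 := by omega
        have ek1 := hodek t (k+1) ⟨by omega, hk1'⟩
        rw [ek1, ek, hqin t (k+1) (by omega) hk1', hqin t k h1 h2,
          hqin t (k-1) (by omega) (by omega)]
        have hkk : k - 1 + 1 = k := by omega
        have hkk2 : k + 1 - 1 = k := by omega
        rw [hkk, hkk2]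
        ring
  -- apply energy bound
  have hmain := wave_energy N (by omega) (ω' * N) q p hq0 hqN hp hp0 hpN hlap
  -- nonnegativity of α, β
  have hα0 : 0 ≤ α := by
    rw [hα]
    exact intervalIntegral.integral_nonneg (by norm_num) (fun s _ => abs_nonneg _)
  have hβ0 : 0 ≤ β := by
    rw [hβ]
    exact intervalIntegral.integral_nonneg (by norm_num) (fun s _ => abs_nonneg _)
  -- Lipschitz bounds
  have hXl := lip_bound hX (hX0.trans hX1.symm) hα
  have hVl := lip_bound hV (hV0.trans hV1.symm) hβ
  have hNcast : ((N-1:ℕ):ℝ) = (N:ℝ) - 1 := by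
    rw [Nat.cast_sub (by omega)]; norm_num
  -- initial velocity energy
  have hSp : ∑ j ∈ Finset.range (N-1), (p 0 (j+1))^2 ≤ β^2 / N := by
    have hbd : ∀ j ∈ Finset.range (N-1), (p 0 (j+1))^2 ≤ (β/N)^2 := by
      intro j hj
      have hj' := Finset.mem_range.mp hj
      have hval : p 0 (j+1) = (1/(N:ℝ)) * V (((j+1:ℕ):ℝ) / N) := by
        rw [hpin 0 (j+1) (by omega) (by omega)]
        exact hinitv (j+1) ⟨by omega, by omega⟩
      have hs : ((j+1:ℕ):ℝ)/N ∈ Set.Icc (0:ℝ) 1 := by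
        constructor
        · positivity
        · rw [div_le_one hN0]; exact_mod_cast Nat.le_of_lt_succ (by omega)
      have hVb : |V (((j+1:ℕ):ℝ)/N)| ≤ β := by
        have h1 := hVl _ hs 0 ⟨le_rfl, by norm_num⟩
        rw [hV0, sub_zero, sub_zero] at h1
        refine h1.trans ?_
        have habs : |((j+1:ℕ):ℝ)/N| ≤ 1 := by
          rw [abs_of_nonneg hs.1]; exact hs.2
        nlinarith [hβ0]
      have h2 : (V (((j+1:ℕ):ℝ)/N))^2 ≤ β^2 := by
        nlinarith [abs_nonneg (V (((j+1:ℕ):ℝ)/N)), sq_abs (V (((j+1:ℕ):ℝ)/N))]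
      rw [hval]
      have h3 : ((1/(N:ℝ)) * V (((j+1:ℕ):ℝ)/N))^2 = (V (((j+1:ℕ):ℝ)/N))^2 * (1/N)^2 := by ring
      have h4 : (β/(N:ℝ))^2 = β^2 * (1/N)^2 := by ring
      rw [h3, h4]
      exact mul_le_mul_of_nonneg_right h2 (sq_nonneg _)
    calc ∑ j ∈ Finset.range (N-1), (p 0 (j+1))^2
        ≤ (Finset.range (N-1)).card • ((β/N)^2) := Finset.sum_le_card_nsmul _ _ _ hbd
      _ = ((N-1:ℕ):ℝ) * (β/N)^2 := by rw [Finset.card_range, nsmul_eq_mul]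
      _ ≤ (N:ℝ) * (β/N)^2 := by
          apply mul_le_mul_of_nonneg_right _ (sq_nonneg _)
          rw [hNcast]; linarith
      _ = β^2 / N := by field_simp
  -- initial gap variation energy
  have hSq : ∑ j ∈ Finset.range N, (q 0 (j+1) - q 0 j)^2 ≤ α^2 / N^3 := by
    have hbd : ∀ j ∈ Finset.range N, (q 0 (j+1) - q 0 j)^2 ≤ (α/N^2)^2 := by
      intro j hj
      have hj' := Finset.mem_range.mp hj
      have hqv : ∀ m, 1 ≤ m → m ≤ N - 1 → q 0 m = (1/(N:ℝ)) * X ((m:ℝ)/N) - 1/N := by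
        intro m h1 h2
        rw [hqin 0 m h1 h2, hinit m ⟨h1, h2⟩]
      have key : |q 0 (j+1) - q 0 j| ≤ α/N^2 := by
        rcases Nat.eq_zero_or_pos j with hj0 | hjpos
        · -- j = 0 : q 0 1 - 0 = (1/N)(X(1/N) - X 0)
          subst hj0
          rw [hq0, sub_zero, hqv 1 le_rfl (by omega)]
          have hs : ((1:ℕ):ℝ)/N ∈ Set.Icc (0:ℝ) 1 := by
            constructor
            · positivity
            · rw [div_le_one hN0]; exact_mod_cast by omega
          have h1 := hXl _ hs 0 ⟨le_rfl, by norm_num⟩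
          rw [hX0, sub_zero] at h1
          have he : (1/(N:ℝ)) * X (((1:ℕ):ℝ)/N) - 1/N = (1/N) * (X (((1:ℕ):ℝ)/N) - 1) := by ring
          push_cast at he h1 ⊢
          rw [he, abs_mul, abs_of_nonneg (by positivity : (0:ℝ) ≤ 1/(N:ℝ))]
          calc 1/(N:ℝ) * |X (1/N) - 1| ≤ 1/N * (α * |1/(N:ℝ)|) := by
                apply mul_le_mul_of_nonneg_left h1 (by positivity)
            _ = α/N^2 := by
                rw [abs_of_nonneg (by positivity : (0:ℝ) ≤ 1/(N:ℝ))]; ring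
        · rcases Nat.lt_or_ge j (N-1) with hjlt | hjge
          · -- interior : 1 ≤ j ≤ N-2
            rw [hqv (j+1) (by omega) (by omega), hqv j (by omega) (by omega)]
            have hs1 : ((j+1:ℕ):ℝ)/N ∈ Set.Icc (0:ℝ) 1 := by
              constructor
              · positivity
              · rw [div_le_one hN0]; exact_mod_cast by omega
            have hs2 : ((j:ℕ):ℝ)/N ∈ Set.Icc (0:ℝ) 1 := by
              constructor
              · positivity
              · rw [div_le_one hN0]; exact_mod_cast by omega
            have h1 := hXl _ hs1 _ hs2
            have he : (1/(N:ℝ)) * X (((j+1:ℕ):ℝ)/N) - 1/N - ((1/(N:ℝ)) * X ((j:ℝ)/N) - 1/N)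
                = (1/N) * (X (((j+1:ℕ):ℝ)/N) - X ((j:ℝ)/N)) := by ring
            rw [he, abs_mul, abs_of_nonneg (by positivity : (0:ℝ) ≤ 1/(N:ℝ))]
            have hd : |((j+1:ℕ):ℝ)/N - (j:ℝ)/N| = 1/N := by
              push_cast
              rw [div_sub_div_same]
              have : ((j:ℝ) + 1 - j) = 1 := by ring
              rw [this, abs_of_nonneg (by positivity : (0:ℝ) ≤ 1/(N:ℝ))]
            rw [hd] at h1
            calc 1/(N:ℝ) * |X (((j+1:ℕ):ℝ)/N) - X ((j:ℝ)/N)| ≤ 1/N * (α * (1/N)) := by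
                  apply mul_le_mul_of_nonneg_left h1 (by positivity)
              _ = α/N^2 := by ring
          · -- j = N-1 : q 0 N - q 0 (N-1) = (1/N)(X 1 - X((N-1)/N))
            have hjeq : j = N - 1 := by omega
            subst hjeq
            have hNe : N - 1 + 1 = N := by omega
            rw [hNe, hqN, hqv (N-1) (by omega) le_rfl, zero_sub]
            have hs2 : ((N-1:ℕ):ℝ)/N ∈ Set.Icc (0:ℝ) 1 := by
              constructor
              · positivity
              · rw [div_le_one hN0, hNcast]; linarith
            have h1 := hXl 1 ⟨by norm_num, le_rfl⟩ _ hs2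
            rw [hX1] at h1
            have he : -((1/(N:ℝ)) * X (((N-1:ℕ):ℝ)/N) - 1/N) = (1/N) * (1 - X (((N-1:ℕ):ℝ)/N)) := by ring
            rw [he, abs_mul, abs_of_nonneg (by positivity : (0:ℝ) ≤ 1/(N:ℝ))]
            have hd : |1 - ((N-1:ℕ):ℝ)/N| = 1/N := by
              rw [hNcast]
              have : 1 - ((N:ℝ)-1)/N = 1/N := by field_simp; ring
              rw [this, abs_of_nonneg (by positivity : (0:ℝ) ≤ 1/(N:ℝ))]
            rw [hd] at h1
            have h1' : |1 - X (((N-1:ℕ):ℝ)/N)| ≤ α * (1/N) := h1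
            calc 1/(N:ℝ) * |1 - X (((N-1:ℕ):ℝ)/N)| ≤ 1/N * (α * (1/N)) := by
                  apply mul_le_mul_of_nonneg_left h1' (by positivity)
              _ = α/N^2 := by ring
      have hpos : (0:ℝ) ≤ α/N^2 := by positivity
      nlinarith [sq_abs (q 0 (j+1) - q 0 j), abs_nonneg (q 0 (j+1) - q 0 j)]
    calc ∑ j ∈ Finset.range N, (q 0 (j+1) - q 0 j)^2
        ≤ (Finset.range N).card • ((α/N^2)^2) := Finset.sum_le_card_nsmul _ _ _ hbd
      _ = (N:ℝ) * (α/N^2)^2 := by rw [Finset.card_range, nsmul_eq_mul]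
      _ = α^2 / N^3 := by field_simp
  -- conclusion
  intro t _ k hk
  have hk1 : 1 ≤ k := hk.1
  have hk2 : k ≤ N - 1 := hk.2
  have hkN : k ≤ N := by omega
  have hq2 := hmain t k hkN
  have hbound : ((ω' * N)^2) * (q t k)^2 ≤ β^2 + ω'^2 * α^2 := by
    calc ((ω' * N)^2) * (q t k)^2
        ≤ (N:ℝ) * ((∑ j ∈ Finset.range (N-1), (p 0 (j+1))^2)
          + (ω' * N)^2 * ∑ j ∈ Finset.range N, (q 0 (j+1) - q 0 j)^2) := hq2
      _ ≤ (N:ℝ) * (β^2/N + (ω' * N)^2 * (α^2/N^3)) := by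
          apply mul_le_mul_of_nonneg_left _ (le_of_lt hN0)
          have h5 : ((ω' * N)^2) * ∑ j ∈ Finset.range N, (q 0 (j+1) - q 0 j)^2
              ≤ ((ω' * N)^2) * (α^2/N^3) :=
            mul_le_mul_of_nonneg_left hSq (sq_nonneg _)
          linarith
      _ = β^2 + ω'^2 * α^2 := by field_simp
  have hω0 : ω' ≠ 0 := ne_of_gt hω
  have hN0' : (N:ℝ) ≠ 0 := ne_of_gt hN0
  have hqk2 : (q t k)^2 ≤ ((α + β/ω')/N)^2 := by
    have hω2 : (0:ℝ) < (ω' * N)^2 := by positivity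
    have h6 : (q t k)^2 ≤ (β^2 + ω'^2 * α^2) / (ω' * N)^2 := by
      rw [le_div_iff₀ hω2]; linarith [hbound]
    refine h6.trans ?_
    have e7 : (β^2 + ω'^2 * α^2) / (ω' * N)^2 = α^2/(N:ℝ)^2 + (β/ω')^2/(N:ℝ)^2 := by
      field_simp; ring
    have e8 : ((α + β/ω')/(N:ℝ))^2 = α^2/(N:ℝ)^2 + (β/ω')^2/(N:ℝ)^2 + 2*α*(β/ω')/(N:ℝ)^2 := by
      ring
    have e9 : (0:ℝ) ≤ 2*α*(β/ω')/(N:ℝ)^2 := by positivity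
    rw [e7, e8]; linarith
  have habs : |q t k| ≤ (α + β/ω')/N := abs_le_of_sq_le_sq hqk2 (by positivity)
  have habs2 : |q t k| ≤ γ/N := by
    refine habs.trans ?_
    have h7 : α + β/ω' ≤ γ := by
      have := div_nonneg hβ0 (le_of_lt hω); linarith [hγ, hα0]
    exact (div_le_div_iff_of_pos_right hN0).mpr h7
  rw [hqin t k hk1 hk2] at habs2
  obtain ⟨hlo, hhi⟩ := abs_le.mp habs2
  have e10 : (1-γ)/(N:ℝ) = 1/N - γ/N := by ring
  have e11 : (1+γ)/(N:ℝ) = 1/N + γ/N := by ring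
  constructor
  · rw [e10]; linarith
  · rw [e11]; linarith
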